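/- Let T be a smooth, symmetric, stationary energy-momentum tensor on Minkowski space integrable over Σ, and let Λ be the pure boost in the x¹-direction with velocity parameter β. Writing P̄^α := P^α[Σ, Λ·T] and P^α := P^α[Σ, T], the following hold: P̄⁰ = γ(P⁰ + 2βP¹ + β²∫_Σ T^{11} d³x), P̄¹ = γ((1+β²)P¹ + βP⁰ + β∫_Σ T^{11} d³x), and P̄ⁿ = Pⁿ + β∫_Σ T^{1n} d³x for n = 2,3. -/

import Mathlib

open MeasureTheory

noncomputable section

lemma integral_comp_mulVec (M : Matrix (Fin 3) (Fin 3) ℝ) (hM : M.det ≠ 0)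
    (h : (Fin 3 → ℝ) → ℝ) :
    ∫ y : Fin 3 → ℝ, h (M.mulVec y) = |M.det|⁻¹ • ∫ y : Fin 3 → ℝ, h y := by
  set f := Matrix.toLin' M with hf
  have hdet : LinearMap.det f ≠ 0 := by rwa [LinearMap.det_toLin']
  have hmap : Measure.map (⇑f) volume
      = ENNReal.ofReal |(LinearMap.det f)⁻¹| • volume :=
    Measure.map_linearMap_addHaar_eq_smul_addHaar (volume : Measure (Fin 3 → ℝ)) hdet
  let e := (f.equivOfDetNeZero hdet).toContinuousLinearEquiv
  have hee : (⇑(e.toHomeomorph.toMeasurableEquiv) : (Fin 3 → ℝ) → (Fin 3 → ℝ)) = ⇑f := rfl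
  have h2 := MeasureTheory.integral_map_equiv (μ := (volume : Measure (Fin 3 → ℝ)))
      (e.toHomeomorph.toMeasurableEquiv) h
  rw [hee, hmap, integral_smul_measure] at h2
  have habs : (0:ℝ) ≤ |(LinearMap.det f)⁻¹| := abs_nonneg _
  rw [ENNReal.toReal_ofReal habs] at h2
  have hfy : ∀ y, f y = M.mulVec y := fun y => Matrix.toLin'_apply M y
  calc ∫ y : Fin 3 → ℝ, h (M.mulVec y) = ∫ y : Fin 3 → ℝ, h (f y) := by simp [hfy]
    _ = |M.det|⁻¹ • ∫ y, h y := by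
        rw [← h2, LinearMap.det_toLin', abs_inv]

lemma integrable_comp_mulVec (M : Matrix (Fin 3) (Fin 3) ℝ) (hM : M.det ≠ 0)
    {h : (Fin 3 → ℝ) → ℝ} (hh : Integrable h) :
    Integrable (fun y : Fin 3 → ℝ => h (M.mulVec y)) := by
  set f := Matrix.toLin' M with hf
  have hdet : LinearMap.det f ≠ 0 := by rwa [LinearMap.det_toLin']
  have hmap : Measure.map (⇑f) volume
      = ENNReal.ofReal |(LinearMap.det f)⁻¹| • volume :=
    Measure.map_linearMap_addHaar_eq_smul_addHaar (volume : Measure (Fin 3 → ℝ)) hdet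
  let e := (f.equivOfDetNeZero hdet).toContinuousLinearEquiv
  have hee : (⇑(e.toHomeomorph.toMeasurableEquiv) : (Fin 3 → ℝ) → (Fin 3 → ℝ)) = ⇑f := rfl
  have h2 := (MeasureTheory.integrable_map_equiv (μ := (volume : Measure (Fin 3 → ℝ)))
      (e.toHomeomorph.toMeasurableEquiv) h)
  rw [hee, hmap] at h2
  have hc0 : ENNReal.ofReal |(LinearMap.det f)⁻¹| ≠ 0 := by
    have hpos : (0:ℝ) < |(LinearMap.det f)⁻¹| := abs_pos.mpr (inv_ne_zero hdet)
    simp [ENNReal.ofReal_eq_zero, not_le, hpos, hdet]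
  have h3 : Integrable h (ENNReal.ofReal |(LinearMap.det f)⁻¹| • volume) :=
    (integrable_smul_measure hc0 ENNReal.ofReal_ne_top).mpr hh
  have h4 := h2.mp h3
  have hfy : ∀ y, f y = M.mulVec y := fun y => Matrix.toLin'_apply M y
  simpa [Function.comp_def, hfy] using h4

lemma stationary_indep (T : (Fin 4 → ℝ) → Fin 4 → Fin 4 → ℝ)
    (hsmooth : ContDiff ℝ (⊤ : ℕ∞) T)
    (hstat : ∀ x α β, fderiv ℝ (fun z => T z α β) x (Pi.single 0 1) = 0)
    (v : Fin 4 → ℝ) (α β : Fin 4) :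
    T v α β = T (Function.update v 0 0) α β := by
  set F : (Fin 4 → ℝ) → ℝ := fun z => T z α β with hF
  have hFd : Differentiable ℝ F := by
    have : ContDiff ℝ (⊤ : ℕ∞) F := by
      have h1 : ContDiff ℝ (⊤ : ℕ∞) (fun z => T z α) :=
        (contDiff_pi.mp hsmooth) α
      exact (contDiff_pi.mp h1) β
    exact this.differentiable (by simp)
  set c : Fin 4 → ℝ := Function.update v 0 0 with hc
  set ψ : ℝ → (Fin 4 → ℝ) := fun t => c + t • (Pi.single 0 1 : Fin 4 → ℝ) with hψ
  have hψv : ψ (v 0) = v := by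
    funext i
    by_cases hi : i = 0 <;> simp [hψ, hc, hi, Function.update]
  have hψ0 : ψ 0 = c := by simp [hψ]
  set g : ℝ → ℝ := fun t => F (ψ t) with hg
  have hder : ∀ t, HasDerivAt g 0 t := by
    intro t
    have h1 : HasDerivAt ψ (Pi.single 0 1) t := by
      simpa [hψ] using ((hasDerivAt_id t).smul_const (Pi.single 0 1 : Fin 4 → ℝ)).const_add c
    have h2 : HasFDerivAt F (fderiv ℝ F (ψ t)) (ψ t) := (hFd (ψ t)).hasFDerivAt
    have := h2.comp_hasDerivAt t h1
    rw [show fderiv ℝ F (ψ t) (Pi.single 0 1) = 0 from hstat (ψ t) α β] at this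
    exact this
  have hconst : ∀ t s : ℝ, g t = g s := by
    intro t s
    have : ∀ x : ℝ, deriv g x = 0 := fun x => (hder x).deriv
    have hgd : Differentiable ℝ g := fun x => (hder x).differentiableAt
    have := is_const_of_deriv_eq_zero hgd this t s
    exact this
  have := hconst (v 0) 0
  rw [hg] at this
  simpa [hψv, hψ0] using this
/-- Embedding of the spacelike hyperplane `Σ = {x⁰ = 0}` into Minkowski space `ℝ⁴`. -/
def emb (y : Fin 3 → ℝ) : Fin 4 → ℝ := Fin.cons 0 y

/-- Total four-momentum `P^α[Σ,T] := ∫_Σ T^{α0} d³x`. -/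
def Pmom (T : (Fin 4 → ℝ) → Fin 4 → Fin 4 → ℝ) (α : Fin 4) : ℝ :=
  ∫ y : Fin 3 → ℝ, T (emb y) α 0

/-- Active Lorentz transformation of a (2,0)-tensor field:
`(Λ·T)^{αβ}(x) = Λ^α_γ Λ^β_δ T^{γδ}(Λ⁻¹x)`. -/
def actT (Λ : Matrix (Fin 4) (Fin 4) ℝ) (T : (Fin 4 → ℝ) → Fin 4 → Fin 4 → ℝ) :
    (Fin 4 → ℝ) → Fin 4 → Fin 4 → ℝ :=
  fun x α β => ∑ γ : Fin 4, ∑ δ : Fin 4, Λ α γ * Λ β δ * T (Λ⁻¹.mulVec x) γ δ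

/-- Lorentz factor `γ = 1/√(1−β²)`. -/
def gam (b : ℝ) : ℝ := 1 / Real.sqrt (1 - b ^ 2)

/-- The pure boost in the `x¹`-direction with velocity parameter `b`
(`Λ⁰₀ = Λ¹₁ = γ`, `Λ⁰₁ = Λ¹₀ = βγ`, `Λ²₂ = Λ³₃ = 1`, all other entries zero). -/
def boost1 (b : ℝ) : Matrix (Fin 4) (Fin 4) ℝ :=
  Matrix.of fun i j =>
    if i = 0 ∧ j = 0 then gam b
    else if i = 0 ∧ j = 1 then b * gam b
    else if i = 1 ∧ j = 0 then b * gam b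
    else if i = 1 ∧ j = 1 then gam b
    else if i = j then 1 else 0

lemma gam_pos {b : ℝ} (hb : b ∈ Set.Ioo (-1 : ℝ) 1) : 0 < gam b := by
  have h1 : 0 < 1 - b ^ 2 := by nlinarith [hb.1, hb.2]
  have := Real.sqrt_pos.mpr h1
  unfold gam; positivity

lemma gam_sq {b : ℝ} (hb : b ∈ Set.Ioo (-1 : ℝ) 1) : gam b ^ 2 * (1 - b ^ 2) = 1 := by
  have h1 : 0 < 1 - b ^ 2 := by nlinarith [hb.1, hb.2]
  have h2 : Real.sqrt (1 - b ^ 2) ^ 2 = 1 - b ^ 2 := Real.sq_sqrt h1.le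
  rw [gam, div_pow, one_pow, h2, one_div, inv_mul_cancel₀ h1.ne']

lemma gam_neg (b : ℝ) : gam (-b) = gam b := by simp [gam]

lemma boost1_inv {b : ℝ} (hb : b ∈ Set.Ioo (-1 : ℝ) 1) :
    (boost1 b)⁻¹ = boost1 (-b) := by
  have key : boost1 (-b) * boost1 b = 1 := by
    have hsq := gam_sq hb
    ext i j
    fin_cases i <;> fin_cases j <;>
      simp [boost1, Matrix.mul_apply, Fin.sum_univ_four, Matrix.one_apply, gam_neg] <;>
      nlinarith [hsq]
  exact Matrix.inv_eq_left_inv key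

/-- The transformation law of the four-momentum integrals of a smooth,
symmetric, stationary energy-momentum tensor under the pure boost in the `x¹`-direction:
`P̄⁰ = γ(P⁰ + 2βP¹ + β²∫T¹¹)`, `P̄¹ = γ((1+β²)P¹ + βP⁰ + β∫T¹¹)`,
`P̄ⁿ = Pⁿ + β∫T^{1n}` for `n = 2,3`. -/
theorem boosted_momentum_formulas
    (T : (Fin 4 → ℝ) → Fin 4 → Fin 4 → ℝ)
    (hsmooth : ContDiff ℝ (⊤ : ℕ∞) T)
    (hsym : ∀ x α β, T x α β = T x β α)
    (hstat : ∀ x α β, fderiv ℝ (fun z => T z α β) x (Pi.single 0 1) = 0)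
    (hInt : ∀ α β, Integrable fun y : Fin 3 → ℝ => T (emb y) α β)
    (b : ℝ) (hb : b ∈ Set.Ioo (-1 : ℝ) 1) :
    Pmom (actT (boost1 b) T) 0
        = gam b * (Pmom T 0 + 2 * b * Pmom T 1
            + b ^ 2 * ∫ y : Fin 3 → ℝ, T (emb y) 1 1) ∧
    Pmom (actT (boost1 b) T) 1
        = gam b * ((1 + b ^ 2) * Pmom T 1 + b * Pmom T 0
            + b * ∫ y : Fin 3 → ℝ, T (emb y) 1 1) ∧
    ∀ n : Fin 4, n = 2 ∨ n = 3 →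
      Pmom (actT (boost1 b) T) n
        = Pmom T n + b * ∫ y : Fin 3 → ℝ, T (emb y) 1 n := by
  have hg : 0 < gam b := gam_pos hb
  set g : ℝ := gam b with hgdef
  set M3 : Matrix (Fin 3) (Fin 3) ℝ :=
    Matrix.diagonal (fun i => if i = 0 then g else 1) with hM3
  have hdet : M3.det = g := by
    rw [hM3, Matrix.det_diagonal, Fin.prod_univ_three]
    norm_num [show (1:Fin 3) ≠ 0 by decide, show (2:Fin 3) ≠ 0 by decide]
  have hdet0 : M3.det ≠ 0 := by rw [hdet]; exact hg.ne'
  set J : Fin 4 → Fin 4 → ℝ := fun γ δ => ∫ y : Fin 3 → ℝ, T (emb y) γ δ with hJ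
  have hJsym : ∀ γ δ, J γ δ = J δ γ := by
    intro γ δ
    exact integral_congr_ae (Filter.Eventually.of_forall fun y => hsym _ _ _)
  -- Step A : pointwise identity
  have hA : ∀ (y : Fin 3 → ℝ) (γ δ : Fin 4),
      T ((boost1 b)⁻¹.mulVec (emb y)) γ δ = T (emb (M3.mulVec y)) γ δ := by
    intro y γ δ
    rw [boost1_inv hb]
    set w : Fin 4 → ℝ := (boost1 (-b)).mulVec (emb y) with hw
    have h1 : T w γ δ = T (Function.update w 0 0) γ δ :=
      stationary_indep T hsmooth hstat w γ δ
    have h2 : Function.update w 0 0 = emb (M3.mulVec y) := by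
      have he0 : emb y 0 = 0 := rfl
      have he1 : emb y 1 = y 0 := rfl
      have he2 : emb y 2 = y 1 := rfl
      have he3 : emb y 3 = y 2 := rfl
      have hw0 : w 1 = g * y 0 := by
        simp [hw, Matrix.mulVec, dotProduct, Fin.sum_univ_four, boost1,
          he0, he1, he2, he3, gam_neg, hgdef]
      have hw2 : w 2 = y 1 := by
        simp [hw, Matrix.mulVec, dotProduct, Fin.sum_univ_four, boost1,
          he0, he1, he2, he3, gam_neg]
      have hw3 : w 3 = y 2 := by
        simp [hw, Matrix.mulVec, dotProduct, Fin.sum_univ_four, boost1,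
          he0, he1, he2, he3, gam_neg]
      have hm : ∀ j : Fin 3, M3.mulVec y j = (if j = 0 then g else 1) * y j := by
        intro j; rw [hM3, Matrix.mulVec_diagonal]
      funext i
      refine Fin.cases ?_ (fun j => ?_) i
      · simp [emb]
      · rw [Function.update_of_ne (Fin.succ_ne_zero j)]
        fin_cases j
        · show w 1 = emb (M3.mulVec y) 1
          rw [hw0, show emb (M3.mulVec y) 1 = M3.mulVec y 0 from rfl, hm 0]
          simp
        · show w 2 = emb (M3.mulVec y) 2
          rw [hw2, show emb (M3.mulVec y) 2 = M3.mulVec y 1 from rfl, hm 1]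
          norm_num [show (1:Fin 3) ≠ 0 by decide]
        · show w 3 = emb (M3.mulVec y) 3
          rw [hw3, show emb (M3.mulVec y) 3 = M3.mulVec y 2 from rfl, hm 2]
          norm_num [show (2:Fin 3) ≠ 0 by decide]
    rw [h1, h2]
  -- Step B : change of variables
  have hB : ∀ γ δ : Fin 4,
      (∫ y : Fin 3 → ℝ, T (emb (M3.mulVec y)) γ δ) = g⁻¹ * J γ δ := by
    intro γ δ
    have := integral_comp_mulVec M3 hdet0 (fun v => T (emb v) γ δ)
    rw [this, hdet, abs_of_pos hg, smul_eq_mul]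
  have hBint : ∀ γ δ : Fin 4,
      Integrable (fun y : Fin 3 → ℝ => T (emb (M3.mulVec y)) γ δ) :=
    fun γ δ => integrable_comp_mulVec M3 hdet0 (hInt γ δ)
  -- Step C : the key expansion
  have key : ∀ α : Fin 4, Pmom (actT (boost1 b) T) α
      = ∑ γ : Fin 4, ∑ δ : Fin 4,
          boost1 b α γ * boost1 b 0 δ * (g⁻¹ * J γ δ) := by
    intro α
    have e1 : Pmom (actT (boost1 b) T) α
        = ∫ y : Fin 3 → ℝ, ∑ γ : Fin 4, ∑ δ : Fin 4,
            boost1 b α γ * boost1 b 0 δ * T (emb (M3.mulVec y)) γ δ := by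
      rw [Pmom]
      refine integral_congr_ae (Filter.Eventually.of_forall fun y => ?_)
      simp only [actT, hA]
    rw [e1]
    rw [integral_finset_sum _ (fun γ _ => integrable_finset_sum _
      (fun δ _ => ((hBint γ δ).const_mul _)))]
    refine Finset.sum_congr rfl fun γ _ => ?_
    rw [integral_finset_sum _ (fun δ _ => ((hBint γ δ).const_mul _))]
    refine Finset.sum_congr rfl fun δ _ => ?_
    rw [MeasureTheory.integral_const_mul, hB]
  have hPmom : ∀ α : Fin 4, Pmom T α = J α 0 := fun α => rfl
  have B00 : boost1 b 0 0 = g := rfl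
  have B01 : boost1 b 0 1 = b * g := rfl
  have B02 : boost1 b 0 2 = 0 := rfl
  have B03 : boost1 b 0 3 = 0 := rfl
  have B10 : boost1 b 1 0 = b * g := rfl
  have B11 : boost1 b 1 1 = g := rfl
  have B12 : boost1 b 1 2 = 0 := rfl
  have B13 : boost1 b 1 3 = 0 := rfl
  have B20 : boost1 b 2 0 = 0 := rfl
  have B21 : boost1 b 2 1 = 0 := rfl
  have B22 : boost1 b 2 2 = 1 := rfl
  have B23 : boost1 b 2 3 = 0 := rfl
  have B30 : boost1 b 3 0 = 0 := rfl
  have B31 : boost1 b 3 1 = 0 := rfl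
  have B32 : boost1 b 3 2 = 0 := rfl
  have B33 : boost1 b 3 3 = 1 := rfl
  have hgg : g ≠ 0 := hg.ne'
  have h01 : J 0 1 = J 1 0 := hJsym 0 1
  refine ⟨?_, ?_, ?_⟩
  · rw [key 0, hPmom, hPmom]
    simp only [Fin.sum_univ_four, B00, B01, B02, B03, B10, B11, B12, B13, B20, B21, B22, B23,
      B30, B31, B32, B33, zero_mul, mul_zero, add_zero, zero_add, h01]
    field_simp
    ring
  · rw [key 1, hPmom, hPmom]
    simp only [Fin.sum_univ_four, B00, B01, B02, B03, B10, B11, B12, B13, B20, B21, B22, B23,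
      B30, B31, B32, B33, zero_mul, mul_zero, add_zero, zero_add, h01]
    field_simp
    ring
  · intro n hn
    have h21 : J 2 1 = J 1 2 := hJsym 2 1
    have h31 : J 3 1 = J 1 3 := hJsym 3 1
    rcases hn with hn | hn <;> subst hn
    · rw [key 2, hPmom]
      simp only [Fin.sum_univ_four, B00, B01, B02, B03, B10, B11, B12, B13, B20, B21, B22, B23,
        B30, B31, B32, B33, zero_mul, mul_zero, add_zero, zero_add, one_mul, h21]
      show g * (g⁻¹ * J 2 0) + b * g * (g⁻¹ * J 1 2) = J 2 0 + b * J 1 2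
      field_simp
    · rw [key 3, hPmom]
      simp only [Fin.sum_univ_four, B00, B01, B02, B03, B10, B11, B12, B13, B20, B21, B22, B23,
        B30, B31, B32, B33, zero_mul, mul_zero, add_zero, zero_add, one_mul, h31]
      show g * (g⁻¹ * J 3 0) + b * g * (g⁻¹ * J 1 3) = J 3 0 + b * J 1 3
      field_simp

end
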